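/- Let P be an n-element poset and let L be a labeling of P such that L⁻¹(n) is a maximal element of P. Then the number of labelings L′ of P with ∂(L′) = L equals the number of L-golden chains of P that contain L⁻¹(n). -/

import Mathlib

open scoped Classical

noncomputable section

abbrev Labeling (P : Type*) [Fintype P] : Type _ := P ≃ Fin (Fintype.card P)

variable {P : Type*} [Fintype P] [PartialOrder P]

def IsLinearExt (L : Labeling P) : Prop := ∀ x y : P, x ≤ y → L x ≤ L y

def lSucc (L : Labeling P) (v : P)
    (h : (Finset.univ.filter fun y => v < y).Nonempty) : P :=
  L.symm (((Finset.univ.filter fun y => v < y).image L).min' (h.image _))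

lemma lt_lSucc (L : Labeling P) (v : P)
    (h : (Finset.univ.filter fun y => v < y).Nonempty) : v < lSucc L v h := by
  have hmem := Finset.min'_mem ((Finset.univ.filter fun y => v < y).image L) (h.image _)
  obtain ⟨y, hy, hLy⟩ := Finset.mem_image.mp hmem
  have heq : lSucc L v h = y := by
    unfold lSucc
    rw [← hLy, Equiv.symm_apply_apply]
  rw [heq]
  exact (Finset.mem_filter.mp hy).2

def promChainFrom (L : Labeling P) (v : P) : List P :=
  if h : (Finset.univ.filter fun y => v < y).Nonempty then
    v :: promChainFrom L (lSucc L v h)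
  else [v]
termination_by (Finset.univ.filter fun y => v < y).card
decreasing_by
  apply Finset.card_lt_card
  refine (Finset.ssubset_iff_of_subset ?_).mpr ?_
  · intro z hz
    simp only [Finset.mem_filter, Finset.mem_univ, true_and] at *
    exact lt_trans (lt_lSucc L v h) hz
  · exact ⟨lSucc L v h, by simp [lt_lSucc L v h], by simp⟩

def promote (L : Labeling P) : Labeling P :=
  if h : Nonempty P then
    ((List.formPerm (promChainFrom L (L.symm ⟨0, @Fintype.card_pos P _ h⟩))).trans L).trans
      (finRotate (Fintype.card P)).symm
  else L

/-- The label of `x` under `L`, as an integer in `{1, …, n}`. -/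
def labelOf (L : Labeling P) (x : P) : ℕ := (L x : ℕ) + 1

/-- The largest `a ∈ {0, …, n}` such that for all `j ∈ {n−a+1, …, n}`, the set
`{x ∈ P : j ≤ L(x) ≤ n}` is an upper order ideal of `P`. -/
def frozenA (L : Labeling P) : ℕ :=
  sSup {a : ℕ | a ≤ Fintype.card P ∧
    ∀ j, Fintype.card P - a + 1 ≤ j → j ≤ Fintype.card P →
      IsUpperSet {x : P | j ≤ labelOf L x ∧ labelOf L x ≤ Fintype.card P}}

/-- `x` is frozen with respect to `L` if `n − a + 1 ≤ L(x) ≤ n`, where `a` is as in `frozenA`. -/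
def IsFrozen (L : Labeling P) (x : P) : Prop :=
  Fintype.card P - frozenA L + 1 ≤ labelOf L x

/-- A labeling of an `n`-element poset is tangled if `n ≥ 2` and `∂^{n−2}(L)` is
not a linear extension. -/
def IsTangled (L : Labeling P) : Prop :=
  2 ≤ Fintype.card P ∧ ¬ IsLinearExt (promote^[Fintype.card P - 2] L)

/-- A labeling of an `n`-element poset is `k`-untangled if `n ≥ k + 2` and
`∂^{n−k−2}(L)` is not a linear extension. -/
def IsUntangled (k : ℕ) (L : Labeling P) : Prop :=
  k + 2 ≤ Fintype.card P ∧ ¬ IsLinearExt (promote^[Fintype.card P - k - 2] L)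

/-- The comparability graph of a poset. -/
def compGraph (P : Type*) [PartialOrder P] : SimpleGraph P where
  Adj x y := x ≠ y ∧ (x ≤ y ∨ y ≤ x)
  symm := by
    constructor
    intro x y hxy
    exact ⟨hxy.1.symm, hxy.2.symm⟩
  loopless := by
    constructor
    intro x hx
    exact hx.1 rfl

/-- The standardization of an injective map from a finite type into a linear order:
the unique relabeling by `{1, …, n}` with the same relative order of values. -/
def standardize {R β : Type*} [Fintype R] [LinearOrder β]
    (f : R → β) (hf : Function.Injective f) : R ≃ Fin (Fintype.card R) :=
  have hcard : (Finset.univ.image f).card = Fintype.card R := by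
    rw [Finset.card_image_of_injective _ hf, Finset.card_univ]
  (Equiv.ofBijective (fun x => (⟨f x, by simp⟩ : ↥(Finset.univ.image f)))
    (by
      rw [Fintype.bijective_iff_injective_and_card]
      refine ⟨fun a b hab => hf (congrArg Subtype.val hab), ?_⟩
      rw [Fintype.card_coe, hcard])).trans
    ((Finset.univ.image f).orderIsoOfFin hcard).symm.toEquiv

/-- The toggle operator `τ_{k+1}`: it swaps the labels `k+1` and `k+2` (i.e. the
`Fin`-labels `k` and `k+1`) unless `L⁻¹(k+1) <_P L⁻¹(k+2)`. -/
def toggle (L : Labeling P) (k : ℕ) : Labeling P :=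
  if h : k + 1 < Fintype.card P then
    if L.symm ⟨k, Nat.lt_of_succ_lt h⟩ < L.symm ⟨k + 1, h⟩ then L
    else L.trans (Equiv.swap ⟨k, Nat.lt_of_succ_lt h⟩ ⟨k + 1, h⟩)
  else L

/-- An element `x` is `L`-golden if every element strictly above it has a larger label. -/
def IsGolden (L : Labeling P) (x : P) : Prop := ∀ y : P, x < y → L x < L y

/-- The largest label `n` of an `n`-element poset, as an element of `Fin n`. -/
def topFin (P : Type*) [Fintype P] [Nonempty P] : Fin (Fintype.card P) :=
  ⟨Fintype.card P - 1, Nat.sub_lt Fintype.card_pos Nat.one_pos⟩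

namespace GoldenAux

/-! ### Fin helpers -/

lemma rot_val {n : ℕ} (j : Fin n) (hj : (j : ℕ) + 1 < n) :
    ((finRotate n j : Fin n) : ℕ) = (j : ℕ) + 1 := by
  cases n with
  | zero => exact absurd j.isLt (by omega)
  | succ m =>
    rw [finRotate_succ_apply]
    exact Fin.val_add_one_of_lt (by
      rw [Fin.lt_iff_val_lt_val]
      simp only [Fin.val_last]
      omega)

lemma rot_top {n : ℕ} (hn : 0 < n) :
    finRotate n ⟨n - 1, by omega⟩ = ⟨0, hn⟩ := by
  cases n with
  | zero => omega
  | succ m => exact finRotate_last'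

lemma le_topFin [Nonempty P] (j : Fin (Fintype.card P)) : j ≤ topFin P := by
  have := j.isLt
  simp only [topFin, Fin.le_def]
  omega

lemma val_succ_lt [Nonempty P] {j : Fin (Fintype.card P)} (hj : j ≠ topFin P) :
    (j : ℕ) + 1 < Fintype.card P := by
  have h1 := j.isLt
  have h2 : (j : ℕ) ≠ Fintype.card P - 1 := by
    intro hc
    exact hj (Fin.ext hc)
  have := Fintype.card_pos (α := P)
  omega

lemma lt_topFin [Nonempty P] {j : Fin (Fintype.card P)} (hj : j ≠ topFin P) :
    j < topFin P :=
  lt_of_le_of_ne (le_topFin j) hj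

/-! ### lSucc lemmas -/

lemma lSucc_le (L : Labeling P) (v : P)
    (h : (Finset.univ.filter fun y => v < y).Nonempty) {y : P} (hy : v < y) :
    L (lSucc L v h) ≤ L y := by
  unfold lSucc
  rw [Equiv.apply_symm_apply]
  exact Finset.min'_le _ _ (Finset.mem_image_of_mem _ (by simp [hy]))

lemma lSucc_eq (L : Labeling P) (v : P)
    (h : (Finset.univ.filter fun y => v < y).Nonempty) {w : P} (hvw : v < w)
    (hmin : ∀ y, v < y → L w ≤ L y) : lSucc L v h = w :=
  L.injective (le_antisymm (lSucc_le L v h hvw) (hmin _ (lt_lSucc L v h)))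

/-! ### promChainFrom structural lemmas -/

lemma promChainFrom_pos (L : Labeling P) (v : P)
    (h : (Finset.univ.filter fun y => v < y).Nonempty) :
    promChainFrom L v = v :: promChainFrom L (lSucc L v h) := by
  rw [promChainFrom]
  exact dif_pos h

lemma promChainFrom_neg (L : Labeling P) (v : P)
    (h : ¬ (Finset.univ.filter fun y => v < y).Nonempty) :
    promChainFrom L v = [v] := by
  rw [promChainFrom]
  exact dif_neg h

lemma promChainFrom_ne_nil (L : Labeling P) (v : P) : promChainFrom L v ≠ [] := by
  rw [promChainFrom]
  split <;> simp

lemma promChainFrom_head? (L : Labeling P) (v : P) :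
    (promChainFrom L v).head? = some v := by
  rw [promChainFrom]
  split <;> simp

lemma promChainFrom_head (L : Labeling P) (v : P) (hne : promChainFrom L v ≠ []) :
    (promChainFrom L v).head hne = v := by
  have := promChainFrom_head? L v
  rwa [List.head?_eq_head hne, Option.some_inj] at this

lemma filter_card_lt (L : Labeling P) (v : P)
    (h : (Finset.univ.filter fun y => v < y).Nonempty) :
    (Finset.univ.filter fun y => lSucc L v h < y).card <
      (Finset.univ.filter fun y => v < y).card := by
  apply Finset.card_lt_card
  refine (Finset.ssubset_iff_of_subset ?_).mpr ?_
  · intro z hz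
    simp only [Finset.mem_filter, Finset.mem_univ, true_and] at *
    exact lt_trans (lt_lSucc L v h) hz
  · exact ⟨lSucc L v h, by simp [lt_lSucc L v h], by simp⟩

lemma promChainFrom_chain' (L : Labeling P) (v : P) :
    (promChainFrom L v).Chain'
      (fun a b => ∃ h : (Finset.univ.filter fun y => a < y).Nonempty, lSucc L a h = b) := by
  suffices H : ∀ N (v : P), (Finset.univ.filter fun y => v < y).card ≤ N →
      (promChainFrom L v).Chain'
        (fun a b => ∃ h : (Finset.univ.filter fun y => a < y).Nonempty, lSucc L a h = b) from
    H _ v le_rfl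
  intro N
  induction N with
  | zero =>
    intro v hv
    by_cases h : (Finset.univ.filter fun y => v < y).Nonempty
    · exact absurd (Finset.card_pos.mpr h) (by omega)
    · rw [promChainFrom_neg L v h]; exact List.isChain_singleton _
  | succ N ih =>
    intro v hv
    by_cases h : (Finset.univ.filter fun y => v < y).Nonempty
    · rw [promChainFrom_pos L v h]
      show List.IsChain _ _
      rw [List.isChain_cons]
      refine ⟨?_, ih _ (by have := filter_card_lt L v h; omega)⟩
      intro y hy
      rw [promChainFrom_head? L _, Option.mem_some_iff] at hy
      exact ⟨h, hy⟩
    · rw [promChainFrom_neg L v h]; exact List.isChain_singleton _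

lemma promChainFrom_getLast?_max (L : Labeling P) (v : P) {w : P}
    (hw : (promChainFrom L v).getLast? = some w) : IsMax w := by
  suffices H : ∀ N (v : P), (Finset.univ.filter fun y => v < y).card ≤ N →
      ∀ w, (promChainFrom L v).getLast? = some w → IsMax w from
    H _ v le_rfl w hw
  intro N
  induction N with
  | zero =>
    intro v hv w hw
    by_cases h : (Finset.univ.filter fun y => v < y).Nonempty
    · exact absurd (Finset.card_pos.mpr h) (by omega)
    · rw [promChainFrom_neg L v h] at hw
      simp only [List.getLast?_singleton, Option.some_inj] at hw
      subst hw
      intro b hb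
      by_contra hc
      exact h ⟨b, by simp [lt_of_le_of_ne hb (fun he => hc (he ▸ le_rfl))]⟩
  | succ N ih =>
    intro v hv w hw
    by_cases h : (Finset.univ.filter fun y => v < y).Nonempty
    · rw [promChainFrom_pos L v h] at hw
      obtain ⟨a, t, ht⟩ := List.exists_cons_of_ne_nil (promChainFrom_ne_nil L (lSucc L v h))
      rw [ht, List.getLast?_cons_cons] at hw
      refine ih (lSucc L v h) (by have := filter_card_lt L v h; omega) w ?_
      rw [ht]
      exact hw
    · rw [promChainFrom_neg L v h] at hw
      simp only [List.getLast?_singleton, Option.some_inj] at hw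
      subst hw
      intro b hb
      by_contra hc
      exact h ⟨b, by simp [lt_of_le_of_ne hb (fun he => hc (he ▸ le_rfl))]⟩

lemma promChainFrom_getLast_max (L : Labeling P) (v : P)
    (hne : promChainFrom L v ≠ []) : IsMax ((promChainFrom L v).getLast hne) :=
  promChainFrom_getLast?_max L v (List.getLast?_eq_getLast hne ▸ rfl)

/-- Characterization: a list whose consecutive elements are `lSucc`-steps and whose
last element is maximal is the promotion chain from its head. -/
lemma promChainFrom_eq (L : Labeling P) (cs : List P) (hne : cs ≠ [])
    (hstep : ∀ i (hi : i + 1 < cs.length),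
      ∃ h : (Finset.univ.filter fun y => cs[i] < y).Nonempty,
        lSucc L cs[i] h = cs[i + 1])
    (hlast : ∀ y : P, ¬ cs.getLast hne < y) :
    promChainFrom L (cs.head hne) = cs := by
  induction cs with
  | nil => exact absurd rfl hne
  | cons v t ih =>
    cases t with
    | nil =>
      have hemp : ¬ (Finset.univ.filter fun y => v < y).Nonempty := by
        rintro ⟨y, hy⟩
        simp only [Finset.mem_filter, Finset.mem_univ, true_and] at hy
        exact hlast y (by simpa using hy)
      rw [show ([v] : List P).head hne = v from rfl, promChainFrom_neg L v hemp]
    | cons w t' =>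
      obtain ⟨hfe, hls⟩ := hstep 0 (by simp)
      simp only [List.getElem_cons_zero, List.getElem_cons_succ] at hls
      rw [show (v :: w :: t').head hne = v from rfl, promChainFrom_pos L v hfe, hls]
      have hne' : w :: t' ≠ [] := by simp
      have := ih hne' (fun i hi => by
          have := hstep (i + 1) (by simpa using Nat.succ_lt_succ hi)
          simpa using this)
        (by
          intro y
          rw [show (w :: t').getLast hne' = (v :: w :: t').getLast hne from
            (List.getLast_cons hne').symm]
          exact hlast y)
      rw [show (w :: t').head hne' = w from rfl] at this
      rw [this]

/-! ### The sorted list of a set, ordered by labels -/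

def listOf (L : Labeling P) (C : Set P) : List P :=
  ((Set.toFinset C).image L).sort (· ≤ ·) |>.map L.symm

lemma mem_listOf {L : Labeling P} {C : Set P} {x : P} : x ∈ listOf L C ↔ x ∈ C := by
  simp only [listOf, List.mem_map, Finset.mem_sort, Finset.mem_image, Set.mem_toFinset]
  constructor
  · rintro ⟨a, ⟨y, hy, rfl⟩, rfl⟩
    simpa using hy
  · intro hx
    exact ⟨L x, ⟨x, hx, rfl⟩, by simp⟩

lemma nodup_listOf {L : Labeling P} {C : Set P} : (listOf L C).Nodup :=
  (Finset.sort_nodup _ _).map L.symm.injective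

lemma sorted_listOf {L : Labeling P} {C : Set P} :
    (listOf L C).Pairwise (fun a b => L a < L b) := by
  have h := (Finset.sortedLT_sort ((Set.toFinset C).image L)).pairwise
  rw [listOf, List.pairwise_map]
  exact h.imp (fun hab => by simpa using hab)

lemma listOf_eq (L : Labeling P) (cs : List P) (hnd : cs.Nodup)
    (hLsort : cs.Pairwise fun a b => L a < L b) :
    listOf L {x | x ∈ cs} = cs := by
  haveI : IsAntisymm P (fun a b => L a < L b) :=
    ⟨fun a b h1 h2 => absurd (h1.trans h2) (lt_irrefl _)⟩
  refine List.Perm.eq_of_pairwise (le := fun a b => L a < L b)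
    (fun a b _ _ h1 h2 => absurd (h1.trans h2) (lt_irrefl _)) sorted_listOf hLsort ?_
  refine List.perm_of_nodup_nodup_toFinset_eq nodup_listOf hnd ?_
  ext x
  simp [mem_listOf]

/-! ### The key lemma -/

/-- Core verification: if `cs` is an `L`-golden chain listed in increasing order,
ending at the element with top label (which is maximal), and `L'` is related to `L`
by `L' ∘ formPerm cs = finRotate ∘ L`, then `cs` is the promotion chain of `L'` and
its head has label `0` under `L'`. -/
lemma key_chain [Nonempty P] (L L' : Labeling P) (cs : List P)
    (hne : cs ≠ []) (hnd : cs.Nodup)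
    (hsort : cs.Pairwise (· < ·))
    (hkey : ∀ x, L' (cs.formPerm x) = finRotate (Fintype.card P) (L x))
    (hgold : ∀ z ∈ cs, IsGolden L z)
    (hlast : cs.getLast hne = L.symm (topFin P))
    (htop : IsMax (L.symm (topFin P))) :
    promChainFrom L' (cs.head hne) = cs ∧ L' (cs.head hne) = ⟨0, Fintype.card_pos⟩ := by
  have hlen : 0 < cs.length := List.length_pos_iff.mpr hne
  have hps := List.pairwise_iff_getElem.mp hsort
  have hlast_idx : cs.getLast hne = cs[cs.length - 1] := cs.getLast_eq_getElem hne
  have hLtop : L cs[cs.length - 1] = topFin P := by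
    rw [← hlast_idx, hlast, Equiv.apply_symm_apply]
  have key' : ∀ i j (hi : i < cs.length) (hj : j < cs.length), (i + 1) % cs.length = j →
      L' cs[j] = finRotate (Fintype.card P) (L cs[i]) := by
    intro i j hi hj hmod
    subst hmod
    rw [← List.formPerm_apply_getElem cs hnd i hi]
    exact hkey _
  have hne_top : ∀ i (hi : i < cs.length - 1), L cs[i] ≠ topFin P := by
    intro i hi hc
    have : cs[i] = cs[cs.length - 1] := L.injective (hc.trans hLtop.symm)
    rw [List.Nodup.getElem_inj_iff hnd] at this
    omega
  have hval : ∀ i (hi : i + 1 < cs.length),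
      ((L' (cs[i + 1]) : Fin (Fintype.card P)) : ℕ) = ((L cs[i] : Fin _) : ℕ) + 1 := by
    intro i hi
    have h1 := key' i (i + 1) (by omega) hi (Nat.mod_eq_of_lt hi)
    rw [h1]
    exact rot_val _ (val_succ_lt (hne_top i (by omega)))
  -- the head has label 0
  have hhead0 : L' (cs.head hne) = ⟨0, Fintype.card_pos⟩ := by
    have h2 : (cs.length - 1 + 1) % cs.length = 0 := by
      have : cs.length - 1 + 1 = cs.length := by omega
      rw [this, Nat.mod_self]
    have h1 := key' (cs.length - 1) 0 (by omega) (by omega) h2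
    rw [List.head_eq_getElem]
    rw [h1, hLtop]
    exact rot_top Fintype.card_pos
  refine ⟨?_, hhead0⟩
  -- minimality of successive labels
  have hmin : ∀ i (hi : i + 1 < cs.length), ∀ y : P, cs[i] < y →
      L' (cs[i + 1]) ≤ L' y := by
    intro i hi y hy
    rw [Fin.le_def, hval i hi]
    by_cases hyc : y ∈ cs
    · obtain ⟨j, hj, rfl⟩ := List.mem_iff_getElem.mp hyc
      have hij : i < j := by
        rcases lt_trichotomy i j with h' | h' | h'
        · exact h'
        · subst h'
          exact absurd hy (lt_irrefl _)
        · exact absurd (hps j i hj (by omega) h') (lt_asymm hy)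
      obtain ⟨k, rfl⟩ : ∃ k, j = k + 1 := ⟨j - 1, by omega⟩
      rw [hval k hj]
      have : (L cs[i] : ℕ) ≤ (L (cs[k]) : ℕ) := by
        rcases Nat.lt_or_ge i k with h' | h'
        · exact le_of_lt (hgold _ (List.getElem_mem _) _ (hps i k (by omega) (by omega) h'))
        · have : i = k := by omega
          subst this
          exact le_rfl
      omega
    · have hLy : L' y = finRotate (Fintype.card P) (L y) := by
        have := hkey y
        rwa [List.formPerm_apply_of_notMem hyc] at this
      have hy_top : L y ≠ topFin P := by
        intro hc
        apply hyc
        have : y = cs.getLast hne := by rw [hlast, ← hc, Equiv.symm_apply_apply]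
        rw [this]
        exact List.getLast_mem hne
      rw [hLy, rot_val _ (val_succ_lt hy_top)]
      have := hgold _ (List.getElem_mem (by omega : i < cs.length)) y hy
      rw [Fin.lt_def] at this
      omega
  -- the steps are lSucc-steps
  have hstep : ∀ i (hi : i + 1 < cs.length),
      ∃ h : (Finset.univ.filter fun y => cs[i] < y).Nonempty,
        lSucc L' cs[i] h = cs[i + 1] := by
    intro i hi
    have hlt : cs[i] < cs[i + 1] := hps i (i + 1) (by omega) hi (by omega)
    exact ⟨⟨cs[i + 1], by simp [hlt]⟩,
      lSucc_eq L' _ _ hlt (fun y hy => hmin i hi y hy)⟩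
  refine promChainFrom_eq L' cs hne hstep ?_
  intro y hy
  rw [hlast] at hy
  exact hy.not_ge (htop hy.le)

/-! ### Properties of the promotion chain of a preimage -/

lemma chain_props [Nonempty P] (L L' : Labeling P)
    (hkey : ∀ x, L' ((promChainFrom L' (L'.symm ⟨0, Fintype.card_pos⟩)).formPerm x) =
      finRotate (Fintype.card P) (L x)) :
    (promChainFrom L' (L'.symm ⟨0, Fintype.card_pos⟩)).Pairwise (· < ·) ∧
    (∀ z ∈ promChainFrom L' (L'.symm ⟨0, Fintype.card_pos⟩), IsGolden L z) ∧
    (promChainFrom L' (L'.symm ⟨0, Fintype.card_pos⟩)).getLast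
      (promChainFrom_ne_nil L' _) = L.symm (topFin P) := by
  set v₁ := L'.symm ⟨0, Fintype.card_pos⟩ with hv₁
  set cs := promChainFrom L' v₁ with hc
  have hne : cs ≠ [] := promChainFrom_ne_nil L' v₁
  have hlen : 0 < cs.length := List.length_pos_iff.mpr hne
  have hchain := promChainFrom_chain' L' v₁
  rw [← hc] at hchain
  have hsort : cs.Pairwise (· < ·) := by
    haveI : IsTrans P (· < ·) := ⟨fun _ _ _ => lt_trans⟩
    rw [← List.isChain_iff_pairwise]
    exact hchain.imp (fun a b hab => by obtain ⟨hf, heq⟩ := hab; exact heq ▸ lt_lSucc L' _ hf)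
  have hnd : cs.Nodup := hsort.imp (fun h => ne_of_lt h)
  have hps := List.pairwise_iff_getElem.mp hsort
  have hstep : ∀ i (hi : i + 1 < cs.length),
      ∃ h : (Finset.univ.filter fun y => cs[i] < y).Nonempty,
        lSucc L' cs[i] h = cs[i + 1] := by
    have := List.isChain_iff_getElem.mp hchain
    intro i hi
    have h' := this i (by omega)
    simpa using h'
  have key' : ∀ i j (hi : i < cs.length) (hj : j < cs.length), (i + 1) % cs.length = j →
      L' cs[j] = finRotate (Fintype.card P) (L cs[i]) := by
    intro i j hi hj hmod
    subst hmod
    rw [← List.formPerm_apply_getElem cs hnd i hi]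
    exact hkey _
  -- the last element has top label
  have hhead : cs.head hne = v₁ := promChainFrom_head L' v₁ hne
  have hLtop : L (cs[cs.length - 1]) = topFin P := by
    have h2 : (cs.length - 1 + 1) % cs.length = 0 := by
      have : cs.length - 1 + 1 = cs.length := by omega
      rw [this, Nat.mod_self]
    have h1 := key' (cs.length - 1) 0 (by omega) (by omega) h2
    have h0 : cs[0] = v₁ := by
      rw [← cs.head_eq_getElem hne]
      exact hhead
    rw [h0, hv₁, Equiv.apply_symm_apply] at h1
    have h3 : finRotate (Fintype.card P) (topFin P) = ⟨0, Fintype.card_pos⟩ :=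
      rot_top Fintype.card_pos
    exact (finRotate (Fintype.card P)).injective (h1.symm.trans h3.symm)
  have hlast : cs.getLast hne = L.symm (topFin P) := by
    rw [cs.getLast_eq_getElem hne, ← hLtop, Equiv.symm_apply_apply]
  have hne_top : ∀ i (hi : i < cs.length - 1), L cs[i] ≠ topFin P := by
    intro i hi hcon
    have : cs[i] = cs[cs.length - 1] := L.injective (hcon.trans hLtop.symm)
    rw [List.Nodup.getElem_inj_iff hnd] at this
    omega
  have hval : ∀ i (hi : i + 1 < cs.length),
      ((L' (cs[i + 1]) : Fin (Fintype.card P)) : ℕ) =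
        ((L cs[i] : Fin _) : ℕ) + 1 := by
    intro i hi
    have h1 := key' i (i + 1) (by omega) hi (Nat.mod_eq_of_lt hi)
    rw [h1]
    exact rot_val _ (val_succ_lt (hne_top i (by omega)))
  -- goldenness
  have hgold : ∀ z ∈ cs, IsGolden L z := by
    intro z hz y hy
    obtain ⟨i, hi, rfl⟩ := List.mem_iff_getElem.mp hz
    by_cases hi1 : i + 1 < cs.length
    · -- minimality of lSucc gives the bound
      obtain ⟨hf, heq⟩ := hstep i hi1
      have hmin : ∀ w : P, cs[i] < w → L' (cs[i + 1]) ≤ L' w := by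
        intro w hw
        rw [← heq]
        exact lSucc_le L' _ hf hw
      rw [Fin.lt_def]
      by_cases hyc : y ∈ cs
      · obtain ⟨j, hj, rfl⟩ := List.mem_iff_getElem.mp hyc
        have hij : i < j := by
          rcases lt_trichotomy i j with h' | h' | h'
          · exact h'
          · subst h'
            exact absurd hy (lt_irrefl _)
          · exact absurd (hps j i hj (by omega) h') (lt_asymm hy)
        by_cases hj1 : j + 1 < cs.length
        · have h1 := hmin _ (lt_trans hy (hps j (j + 1) hj hj1 (by omega)))
          have h2 : (cs[i + 1]) ≠ (cs[j + 1]) := by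
            intro hcon
            rw [List.Nodup.getElem_inj_iff hnd] at hcon
            omega
          have h3 : L' (cs[i + 1]) < L' (cs[j + 1]) :=
            lt_of_le_of_ne h1 (fun hcon => h2 (L'.injective hcon))
          rw [Fin.lt_def, hval i hi1, hval j hj1] at h3
          omega
        · have hjl : j = cs.length - 1 := by omega
          have : L (cs[j]) = topFin P := by
            subst hjl; exact hLtop
          rw [this]
          have h4 := hne_top i (by omega)
          have := val_succ_lt h4
          simp only [topFin]
          omega
      · have hLy : L' y = finRotate (Fintype.card P) (L y) := by
          have := hkey y
          rwa [List.formPerm_apply_of_notMem hyc] at this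
        have hy_top : L y ≠ topFin P := by
          intro hcon
          apply hyc
          have : y = cs.getLast hne := by rw [hlast, ← hcon, Equiv.symm_apply_apply]
          rw [this]
          exact List.getLast_mem hne
        have h1 := hmin y hy
        have h2 : (cs[i + 1]) ≠ y := fun hcon => hyc (by rw [← hcon]; exact List.getElem_mem _)
        have h3 : L' (cs[i + 1]) < L' y :=
          lt_of_le_of_ne h1 (fun hcon => h2 (L'.injective hcon))
        rw [Fin.lt_def, hval i hi1, hLy, rot_val _ (val_succ_lt hy_top)] at h3
        omega
    · -- i is the last index: maximal element, contradiction
      have hil : i = cs.length - 1 := by omega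
      subst hil
      have h5 := promChainFrom_getLast_max L' v₁ hne
      rw [cs.getLast_eq_getElem hne] at h5
      exact absurd (h5 hy.le) hy.not_ge
  exact ⟨hsort, hgold, hlast⟩

/-! ### The inverse map -/

def phi (L : Labeling P) (C : Set P) : Labeling P :=
  ((List.formPerm (listOf L C)).symm.trans L).trans (finRotate (Fintype.card P))

lemma phi_key (L : Labeling P) (C : Set P) (x : P) :
    phi L C ((listOf L C).formPerm x) = finRotate (Fintype.card P) (L x) := by
  simp [phi]

end GoldenAux

open GoldenAux in
/-- If `L⁻¹(n)` is maximal, then the number of preimages of `L`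
under extended promotion equals the number of `L`-golden chains of `P`
containing `L⁻¹(n)`. -/
theorem card_preimages_eq_golden_chains [Nonempty P] (L : Labeling P)
    (h : IsMax (L.symm (topFin P))) :
    Nat.card {L' : Labeling P // promote L' = L} =
      Nat.card {C : Set P // IsChain (· ≤ ·) C ∧ (∀ z ∈ C, IsGolden L z) ∧
        L.symm (topFin P) ∈ C} := by
  have hNe : Nonempty P := ‹_›
  -- forward direction: a preimage gives a golden chain
  have forward : ∀ L' : Labeling P, promote L' = L →
      (IsChain (· ≤ ·) {x | x ∈ promChainFrom L' (L'.symm ⟨0, Fintype.card_pos⟩)} ∧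
        (∀ z ∈ ({x | x ∈ promChainFrom L' (L'.symm ⟨0, Fintype.card_pos⟩)} : Set P),
          IsGolden L z) ∧
        L.symm (topFin P) ∈ {x | x ∈ promChainFrom L' (L'.symm ⟨0, Fintype.card_pos⟩)}) ∧
      phi L {x | x ∈ promChainFrom L' (L'.symm ⟨0, Fintype.card_pos⟩)} = L' := by
    intro L' hL'
    unfold promote at hL'
    rw [dif_pos hNe] at hL'
    set cs : List P := promChainFrom L' (L'.symm ⟨0, Fintype.card_pos⟩) with hcdef
    have hL2 : ((List.formPerm cs).trans L').trans (finRotate (Fintype.card P)).symm = L := hL'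
    have hkey : ∀ x, L' (cs.formPerm x) = finRotate (Fintype.card P) (L x) := by
      intro x
      rw [← hL2]
      simp
    obtain ⟨hsort, hgold, hlast⟩ := chain_props L L' hkey
    have hnd : cs.Nodup := hsort.imp (fun h => ne_of_lt h)
    have hne : cs ≠ [] := promChainFrom_ne_nil L' _
    have hps := List.pairwise_iff_getElem.mp hsort
    refine ⟨⟨?_, ?_, ?_⟩, ?_⟩
    · -- chain
      intro a ha b hb hab
      haveI : Std.Symm (fun a b : P => a < b ∨ b < a) := ⟨fun a b hab => hab.symm⟩
      have hfa := List.Pairwise.forall (R := fun a b : P => a < b ∨ b < a)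
        (hsort.imp (fun h => Or.inl h))
      exact (hfa ha hb hab).imp le_of_lt le_of_lt
    · -- golden
      intro z hz
      exact hgold z hz
    · -- contains the top
      show L.symm (topFin P) ∈ cs
      rw [← hlast]
      exact List.getLast_mem hne
    · -- phi recovers L'
      have hLsort : cs.Pairwise (fun a b => L a < L b) := by
        rw [List.pairwise_iff_getElem]
        intro i j hi hj hij
        exact hgold _ (List.getElem_mem hi) _ (hps i j hi hj hij)
      have hlist : listOf L {x | x ∈ cs} = cs := listOf_eq L cs hnd hLsort
      have hLval : ∀ x, L x = (finRotate (Fintype.card P)).symm (L' (cs.formPerm x)) := by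
        intro x
        rw [← hL2]
        simp
      apply Equiv.ext
      intro x
      show finRotate (Fintype.card P) (L ((List.formPerm (listOf L {x | x ∈ cs})).symm x)) = L' x
      rw [hlist, hLval ((List.formPerm cs).symm x)]
      simp
  -- backward direction: a golden chain gives a preimage
  have backward : ∀ C : Set P, IsChain (· ≤ ·) C → (∀ z ∈ C, IsGolden L z) →
      L.symm (topFin P) ∈ C →
      promote (phi L C) = L ∧
      {x | x ∈ promChainFrom (phi L C) ((phi L C).symm ⟨0, Fintype.card_pos⟩)} = C := by
    intro C hCchain hCgold hCmem
    set cs : List P := listOf L C with hcdef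
    have hne : cs ≠ [] := List.ne_nil_of_mem (mem_listOf.mpr hCmem)
    have hnd : cs.Nodup := nodup_listOf
    have hLsort : cs.Pairwise (fun a b => L a < L b) := sorted_listOf
    have hLps := List.pairwise_iff_getElem.mp hLsort
    have hsort : cs.Pairwise (· < ·) := by
      rw [List.pairwise_iff_getElem]
      intro i j hi hj hij
      have ha : cs[i] ∈ C := mem_listOf.mp (List.getElem_mem hi)
      have hb : cs[j] ∈ C := mem_listOf.mp (List.getElem_mem hj)
      have hLab : L cs[i] < L cs[j] := hLps i j hi hj hij
      have hab : cs[i] ≠ cs[j] := fun he => absurd (he ▸ hLab) (lt_irrefl _)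
      rcases hCchain ha hb hab with h' | h'
      · exact lt_of_le_of_ne h' hab
      · exact absurd (hCgold _ hb _ (lt_of_le_of_ne h' hab.symm)) (asymm hLab)
    have hgold' : ∀ z ∈ cs, IsGolden L z := fun z hz => hCgold z (mem_listOf.mp hz)
    have hlast : cs.getLast hne = L.symm (topFin P) := by
      obtain ⟨j, hj, hjv⟩ := List.mem_iff_getElem.mp
        (show L.symm (topFin P) ∈ cs from mem_listOf.mpr hCmem)
      have hlen : 0 < cs.length := List.length_pos_iff.mpr hne
      rw [cs.getLast_eq_getElem hne]
      by_cases hjl : j = cs.length - 1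
      · subst hjl
        exact hjv
      · exfalso
        have h1 : L cs[j] < L (cs[cs.length - 1]) :=
          hLps j (cs.length - 1) hj (by omega) (by omega)
        rw [hjv, Equiv.apply_symm_apply] at h1
        exact absurd h1 (not_lt.mpr (le_topFin _))
    have hkey : ∀ x, phi L C (cs.formPerm x) = finRotate (Fintype.card P) (L x) :=
      phi_key L C
    obtain ⟨hpc, hhead0⟩ := key_chain L (phi L C) cs hne hnd hsort hkey hgold' hlast h
    have hheadeq : (phi L C).symm ⟨0, Fintype.card_pos⟩ = cs.head hne := by
      rw [Equiv.symm_apply_eq]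
      exact hhead0.symm
    have hc' : promChainFrom (phi L C) ((phi L C).symm ⟨0, Fintype.card_pos⟩) = cs :=
      (congrArg (promChainFrom (phi L C)) hheadeq).trans hpc
    constructor
    · unfold promote
      rw [dif_pos hNe]
      have hc'' : promChainFrom (phi L C) ((phi L C).symm ⟨0, @Fintype.card_pos P _ hNe⟩) = cs :=
        hc'
      rw [hc'']
      apply Equiv.ext
      intro x
      show (finRotate (Fintype.card P)).symm (phi L C (cs.formPerm x)) = L x
      rw [hkey x]
      simp
    · rw [hc']
      ext x
      exact mem_listOf
  -- assemble the bijection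
  refine Nat.card_congr
    ⟨fun L' => ⟨{x | x ∈ promChainFrom L'.1 (L'.1.symm ⟨0, Fintype.card_pos⟩)},
        (forward L'.1 L'.2).1⟩,
      fun C => ⟨phi L C.1, (backward C.1 C.2.1 C.2.2.1 C.2.2.2).1⟩,
      fun L' => ?_, fun C => ?_⟩
  · exact Subtype.ext (forward L'.1 L'.2).2
  · exact Subtype.ext (backward C.1 C.2.1 C.2.2.1 C.2.2.2).2

end
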